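/- If G is a locally compact second countable Hausdorff Abelian group with Haar measure λ, T(ω,s,·) is a weighted transport-kernel satisfying the invariance property T(θ_t ω, s−t, B−t) = T(ω,s,B) for all s,t ∈ G, ω ∈ Ω, B ∈ 𝒢, and ξ is an invariant random measure (ξ(θ_s ω, B−s) = ξ(ω,B)), then the measure η(ω,·) := ∫ T(ω,s,·) ξ(ω,ds), assumed locally finite, is again an invariant random measure: η(θ_s ω, B−s) = η(ω,B) for all s, ω, B. -/

import Mathlib

open MeasureTheory Set
open scoped ENNReal

/-- If `T` is an invariant weighted transport-kernel and `ξ` an invariant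
random measure, then `η(ω,·) := ∫ T(ω,s,·) ξ(ω,ds)` (assumed locally finite) is again an
invariant random measure. -/
theorem stmt0
    {Ω : Type*} [MeasurableSpace Ω]
    {G : Type*} [AddCommGroup G] [TopologicalSpace G] [IsTopologicalAddGroup G]
    [LocallyCompactSpace G] [SecondCountableTopology G] [T2Space G]
    [MeasurableSpace G] [BorelSpace G]
    (lam : Measure G) [lam.IsAddHaarMeasure]
    (θ : G → Ω → Ω)
    (hθmeas : Measurable fun p : Ω × G => θ p.2 p.1)
    (hθ0 : θ 0 = id)
    (hθadd : ∀ s t : G, θ s ∘ θ t = θ (s + t))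
    (T : Ω → G → Measure G)
    (hTmeas : ∀ B : Set G, MeasurableSet B → Measurable fun p : Ω × G => T p.1 p.2 B)
    (hTinv : ∀ (ω : Ω) (s t : G) (B : Set G), MeasurableSet B →
      T (θ t ω) (s - t) ((· + t) ⁻¹' B) = T ω s B)
    (ξ : Ω → Measure G)
    (hξmeas : ∀ B : Set G, MeasurableSet B → Measurable fun ω => ξ ω B)
    (hξinv : ∀ (ω : Ω) (s : G) (B : Set G), MeasurableSet B →
      ξ (θ s ω) ((· + s) ⁻¹' B) = ξ ω B)
    (η : Ω → Measure G)
    (hη : ∀ (ω : Ω) (B : Set G), MeasurableSet B → η ω B = ∫⁻ s, T ω s B ∂(ξ ω))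
    (hηfin : ∀ ω, IsLocallyFiniteMeasure (η ω)) :
    ∀ (ω : Ω) (s : G) (B : Set G), MeasurableSet B →
      η (θ s ω) ((· + s) ⁻¹' B) = η ω B := by
  intro ω s B hB
  have hBs : MeasurableSet ((· + s) ⁻¹' B) := (measurable_add_const s) hB
  have hmap : Measure.map (· + s) (ξ (θ s ω)) = ξ ω := by
    refine Measure.ext fun A hA => ?_
    rw [Measure.map_apply (measurable_add_const s) hA]
    exact hξinv ω s A hA
  rw [hη (θ s ω) _ hBs, hη ω B hB]
  have h1 : ∀ u : G, T (θ s ω) u ((· + s) ⁻¹' B) = T ω (u + s) B := by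
    intro u
    have := hTinv ω (u + s) s B hB
    simpa using this
  simp_rw [h1]
  have hmeasT : Measurable fun r : G => T ω r B :=
    (hTmeas B hB).comp (measurable_const.prodMk measurable_id)
  calc ∫⁻ u, T ω (u + s) B ∂(ξ (θ s ω))
      = ∫⁻ r, T ω r B ∂(Measure.map (· + s) (ξ (θ s ω))) := by
        rw [lintegral_map hmeasT (measurable_add_const s)]
    _ = ∫⁻ r, T ω r B ∂(ξ ω) := by rw [hmap]
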